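/- Let n ≥ 2 and s ≥ 2, and let G(J(P_n)) = {u_1,…,u_r}. Let U = u_1^{a_1}⋯u_r^{a_r} be an s-fold product in F(J(P_n)^s). If U is not a minimal generator of J(P_n)^s, then there exist indices p and q with a_p > 0 and a_q > 0 such that u_p u_q ∉ G(J(P_n)^2). -/

import Mathlib

open MvPolynomial

noncomputable section

/-- The cover ideal of the path graph `P_n` on vertices `x_1, …, x_n`:
the intersection of the ideals `(x_i, x_{i+1})` over the edges of the path. -/
def pathCoverIdeal (k : Type*) [Field k] (n : ℕ) : Ideal (MvPolynomial ℕ k) :=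
  ⨅ i ∈ Finset.Icc 1 (n - 1), Ideal.span {(X i : MvPolynomial ℕ k), X (i + 1)}

/-- A monomial with coefficient `1`. -/
def IsMonomial {k : Type*} [Field k] (m : MvPolynomial ℕ k) : Prop :=
  ∃ a : ℕ →₀ ℕ, m = monomial a 1

/-- The minimal monomial generating set `G(I)` of a monomial ideal `I`:
monomials of `I` that are not strictly divisible by another monomial of `I`. -/
def minGens {k : Type*} [Field k] (I : Ideal (MvPolynomial ℕ k)) :
    Set (MvPolynomial ℕ k) :=
  {m | IsMonomial m ∧ m ∈ I ∧ ∀ m', IsMonomial m' → m' ∈ I → m' ∣ m → m' = m}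

/-- The rooted list `R(P_n)` of the path `P_n`. -/
def rootedList (k : Type*) [Field k] : ℕ → List (MvPolynomial ℕ k)
  | 0 => [1]
  | 1 => [1]
  | 2 => [X 1, X 2]
  | 3 => [X 2, X 1 * X 3]
  | (n + 4) =>
      ((rootedList k (n + 2)).map fun u => X (n + 3) * u) ++
      ((rootedList k (n + 1)).map fun u => X (n + 4) * X (n + 2) * u)

/-- `F(I^s)`: the set of `s`-fold products of minimal generators of `I`. -/
def sFold {k : Type*} [Field k] (I : Ideal (MvPolynomial ℕ k)) (s : ℕ) :
    Set (MvPolynomial ℕ k) :=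
  {m | ∃ L : List (MvPolynomial ℕ k), L.length = s ∧ (∀ u ∈ L, u ∈ minGens I) ∧ m = L.prod}

/-- `a >_lex b`: the first entry where `a` and `b` differ is bigger in `a`. -/
def lexGt (a b : ℕ → ℕ) : Prop :=
  ∃ t, (∀ j, j < t → a j = b j) ∧ b t < a t

/-- `a` is an exponent-vector expression of `M` as an `s`-fold product of the terms of
the list `L`. -/
def IsExprOn {k : Type*} [Field k] (L : List (MvPolynomial ℕ k)) (s : ℕ) (a : ℕ → ℕ)
    (M : MvPolynomial ℕ k) : Prop :=
  (∀ i, L.length ≤ i → a i = 0) ∧ (∑ i ∈ Finset.range L.length, a i) = s ∧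
    M = ∏ i ∈ Finset.range L.length, (L.getD i 1) ^ (a i)

/-- `a` is the (lexicographically) maximal expression of `M` as an `s`-fold product of
the terms of the list `L`. -/
def IsMaxExpr {k : Type*} [Field k] (L : List (MvPolynomial ℕ k)) (s : ℕ) (a : ℕ → ℕ)
    (M : MvPolynomial ℕ k) : Prop :=
  IsExprOn L s a M ∧ ∀ b, IsExprOn L s b M → b ≠ a → lexGt a b

/-- The rooted order `M >_R N` on `s`-fold products, relative to the list `L` of
minimal generators: maximal expressions are compared lexicographically. -/
def rootedGt {k : Type*} [Field k] (L : List (MvPolynomial ℕ k)) (s : ℕ)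
    (M N : MvPolynomial ℕ k) : Prop :=
  ∃ a b, IsMaxExpr L s a M ∧ IsMaxExpr L s b N ∧ lexGt a b

/-- An ideal is generated by a subset of the variables. -/
def genByVars {k : Type*} [Field k] (I : Ideal (MvPolynomial ℕ k)) : Prop :=
  ∃ T : Set ℕ, I = Ideal.span ((fun i => (X i : MvPolynomial ℕ k)) '' T)

end

noncomputable section AuxFacts

def rootedExp : ℕ → List (ℕ →₀ ℕ)
  | 0 => [0]
  | 1 => [0]
  | 2 => [Finsupp.single 1 1, Finsupp.single 2 1]
  | 3 => [Finsupp.single 2 1, Finsupp.single 1 1 + Finsupp.single 3 1]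
  | (n + 4) =>
      ((rootedExp (n + 2)).map fun e => Finsupp.single (n + 3) 1 + e) ++
      ((rootedExp (n + 1)).map fun e => Finsupp.single (n + 4) 1 + Finsupp.single (n + 2) 1 + e)

lemma rootedList_eq_map (k : Type*) [Field k] :
    ∀ n : ℕ, rootedList k n = (rootedExp n).map fun e => monomial e (1 : k)
  | 0 => by simp [rootedList, rootedExp, monomial_zero']
  | 1 => by simp [rootedList, rootedExp, monomial_zero']
  | 2 => by simp [rootedList, rootedExp]; constructor <;> rfl
  | 3 => by
      simp only [rootedList, rootedExp, List.map_cons, List.map_nil]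
      show _ = [X 2, (monomial ((Finsupp.single 1 1) + Finsupp.single 3 1) : k → _) 1]
      rw [← one_mul (1:k), ← monomial_mul]
      rfl
  | (n + 4) => by
      rw [rootedList, rootedExp, rootedList_eq_map k (n+2), rootedList_eq_map k (n+1)]
      simp only [List.map_append, List.map_map]
      congr 1
      · apply List.map_congr_left
        intro e _
        show (monomial (Finsupp.single (n+3) 1) (1:k)) * monomial e 1
            = monomial ((Finsupp.single (n+3) 1) + e) 1
        rw [monomial_mul, one_mul]
      · apply List.map_congr_left
        intro e _
        show (monomial (Finsupp.single (n+4) 1) (1:k)) * monomial (Finsupp.single (n+2) 1) 1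
            * monomial e 1
            = monomial ((Finsupp.single (n+4) 1) + Finsupp.single (n+2) 1 + e) 1
        rw [monomial_mul, monomial_mul, one_mul, one_mul]


/-- Properties of exponent vectors in the rooted list. -/
def RootedProps (n : ℕ) (e : ℕ →₀ ℕ) : Prop :=
  (∀ j, e j ≤ 1) ∧ (∀ j, e j ≠ 0 → 1 ≤ j ∧ j ≤ n) ∧
  (∀ j, 1 ≤ j → j + 1 ≤ n → 1 ≤ e j + e (j + 1)) ∧
  (2 ≤ n → e 1 + e 2 = 1 ∧ e (n - 1) + e n = 1) ∧ (n < 2 → e = 0)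

lemma rootedExp_props : ∀ n : ℕ, ∀ e ∈ rootedExp n, RootedProps n e
  | 0 => by
      intro e he
      simp [rootedExp] at he
      subst he
      refine ⟨by simp, by simp, by omega, by omega, fun _ => rfl⟩
  | 1 => by
      intro e he
      simp [rootedExp] at he
      subst he
      refine ⟨by simp, by simp, by omega, by omega, fun _ => rfl⟩
  | 2 => by
      intro e he
      simp [rootedExp] at he
      rcases he with rfl | rfl <;>
        refine ⟨fun j => ?_, fun j hj => ?_, fun j h1 h2 => ?_, fun _ => ⟨?_, ?_⟩, by omega⟩ <;>
        simp_all [Finsupp.single_apply] <;> (try split_ifs) <;> omega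
  | 3 => by
      intro e he
      simp [rootedExp] at he
      rcases he with rfl | rfl <;>
        refine ⟨fun j => ?_, fun j hj => ?_, fun j h1 h2 => ?_, fun _ => ⟨?_, ?_⟩, by omega⟩ <;>
        simp_all [Finsupp.single_apply, Finsupp.add_apply] <;> (try split_ifs) <;> omega
  | (n + 4) => by
      intro e he
      rw [rootedExp, List.mem_append] at he
      rcases he with he | he
      · rw [List.mem_map] at he
        obtain ⟨e', he', rfl⟩ := he
        obtain ⟨h1, h2, h3, h4, _⟩ := rootedExp_props (n + 2) e' he'
        have hs1 : e' (n + 3) = 0 := by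
          by_contra h; exact absurd ((h2 _ h).2) (by omega)
        have hs2 : e' (n + 4) = 0 := by
          by_contra h; exact absurd ((h2 _ h).2) (by omega)
        obtain ⟨h4a, h4b⟩ := h4 (by omega)
        refine ⟨fun j => ?_, fun j hj => ?_, fun j hj1 hj2 => ?_, fun _ => ⟨?_, ?_⟩, by omega⟩
        · simp only [Finsupp.add_apply, Finsupp.single_apply]
          rcases eq_or_ne (n + 3) j with rfl | hne
          · simp [hs1]
          · simp [hne]; exact h1 j
        · simp only [Finsupp.add_apply, Finsupp.single_apply] at hj
          rcases eq_or_ne (n + 3) j with rfl | hne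
          · omega
          · simp [hne] at hj; have := h2 j hj; omega
        · simp only [Finsupp.add_apply, Finsupp.single_apply]
          rcases lt_trichotomy (j + 1) (n + 3) with h | h | h
          · have := h3 j hj1 (by omega)
            have hne1 : n + 3 ≠ j := by omega
            have hne2 : n + 3 ≠ j + 1 := by omega
            simp [hne1, hne2]; omega
          · have hx : n + 3 = j + 1 := by omega
            have hne1 : n + 3 ≠ j := by omega
            simp [hne1, hx]
            omega
          · -- j = n + 3
            have hj' : j = n + 3 := by omega
            simp [hj']; omega
        · simp only [Finsupp.add_apply, Finsupp.single_apply]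
          have hne1 : n + 3 ≠ 1 := by omega
          have hne2 : n + 3 ≠ 2 := by omega
          simp [hne1, hne2]; omega
        · simp only [Finsupp.add_apply, Finsupp.single_apply]
          have h5 : n + 4 - 1 = n + 3 := by omega
          rw [h5]
          have hne : n + 3 ≠ n + 4 := by omega
          simp [hne, hs1, hs2]
      · rw [List.mem_map] at he
        obtain ⟨e', he', rfl⟩ := he
        obtain ⟨h1, h2, h3, h4, h5⟩ := rootedExp_props (n + 1) e' he'
        have hs2 : e' (n + 2) = 0 := by
          by_contra h; exact absurd ((h2 _ h).2) (by omega)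
        have hs3 : e' (n + 3) = 0 := by
          by_contra h; exact absurd ((h2 _ h).2) (by omega)
        have hs4 : e' (n + 4) = 0 := by
          by_contra h; exact absurd ((h2 _ h).2) (by omega)
        refine ⟨fun j => ?_, fun j hj => ?_, fun j hj1 hj2 => ?_, fun _ => ⟨?_, ?_⟩, by omega⟩
        · simp only [Finsupp.add_apply, Finsupp.single_apply]
          rcases eq_or_ne (n + 4) j with rfl | hne4
          · have hne2 : n + 2 ≠ n + 4 := by omega
            simp [hne2, hs4]
          · rcases eq_or_ne (n + 2) j with rfl | hne2
            · simp [hne4, hs2]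
            · simp [hne4, hne2]; exact h1 j
        · simp only [Finsupp.add_apply, Finsupp.single_apply] at hj
          rcases eq_or_ne (n + 4) j with rfl | hne4
          · omega
          · rcases eq_or_ne (n + 2) j with rfl | hne2
            · omega
            · simp [hne4, hne2] at hj; have := h2 j hj; omega
        · simp only [Finsupp.add_apply, Finsupp.single_apply]
          rcases lt_trichotomy (j + 1) (n + 2) with h | h | h
          · have := h3 j hj1 (by omega)
            have a1 : n + 4 ≠ j := by omega
            have a2 : n + 4 ≠ j + 1 := by omega
            have a3 : n + 2 ≠ j := by omega
            have a4 : n + 2 ≠ j + 1 := by omega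
            simp [a1, a2, a3, a4]; omega
          · have a4 : n + 2 = j + 1 := by omega
            simp [a4]; omega
          · rcases eq_or_ne j (n + 2) with rfl | hj'
            · simp; omega
            · have hj'' : j = n + 3 := by omega
              subst hj''
              simp; omega
        · simp only [Finsupp.add_apply, Finsupp.single_apply]
          have a1 : n + 4 ≠ 1 := by omega
          have a2 : n + 4 ≠ 2 := by omega
          rcases Nat.eq_zero_or_pos n with rfl | hn
          · have := h5 (by omega)
            subst this
            simp
          · have a3 : n + 2 ≠ 1 := by omega
            have a4 : n + 2 ≠ 2 := by omega
            obtain ⟨h4a, _⟩ := h4 (by omega)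
            simp [a1, a2, a3, a4, hn.ne']; omega
        · simp only [Finsupp.add_apply, Finsupp.single_apply]
          have h6 : n + 4 - 1 = n + 3 := by omega
          rw [h6]
          have a1 : n + 4 ≠ n + 3 := by omega
          have a2 : n + 2 ≠ n + 3 := by omega
          have a3 : n + 2 ≠ n + 4 := by omega
          simp [a1, a2, a3, hs3, hs4]

lemma rootedExp_cover : ∀ n : ℕ, ∀ c : ℕ →₀ ℕ,
    (∀ j, 1 ≤ j → j + 1 ≤ n → 1 ≤ c j ∨ 1 ≤ c (j + 1)) →
    ∃ e ∈ rootedExp n, e ≤ c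
  | 0 => fun c _ => ⟨0, by simp [rootedExp], zero_le⟩
  | 1 => fun c _ => ⟨0, by simp [rootedExp], zero_le⟩
  | 2 => by
      intro c hc
      rcases hc 1 le_rfl (by omega) with h | h
      · exact ⟨Finsupp.single 1 1, by simp [rootedExp], Finsupp.single_le_iff.mpr h⟩
      · exact ⟨Finsupp.single 2 1, by simp [rootedExp], Finsupp.single_le_iff.mpr h⟩
  | 3 => by
      intro c hc
      by_cases h2 : 1 ≤ c 2
      · exact ⟨Finsupp.single 2 1, by simp [rootedExp], Finsupp.single_le_iff.mpr h2⟩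
      · have hc1 : 1 ≤ c 1 := by
          rcases hc 1 le_rfl (by omega) with h | h
          · exact h
          · norm_num at h; omega
        have hc3 : 1 ≤ c 3 := by
          rcases hc 2 (by omega) (by omega) with h | h
          · omega
          · norm_num at h; omega
        refine ⟨Finsupp.single 1 1 + Finsupp.single 3 1, by simp [rootedExp], ?_⟩
        rw [Finsupp.le_def]
        intro j
        simp only [Finsupp.add_apply, Finsupp.single_apply]
        rcases eq_or_ne (1:ℕ) j with rfl | hj1
        · simpa using hc1
        · rcases eq_or_ne (3:ℕ) j with rfl | hj3
          · simpa [hj1] using hc3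
          · simp [hj1, hj3]
  | (n + 4) => by
      intro c hc
      by_cases h : 1 ≤ c (n + 3)
      · obtain ⟨e', he', hle⟩ := rootedExp_cover (n + 2) c (fun j h1 h2 => hc j h1 (by omega))
        have hs : e' (n + 3) = 0 := by
          by_contra hx
          exact absurd ((rootedExp_props (n + 2) e' he').2.1 _ hx).2 (by omega)
        refine ⟨Finsupp.single (n + 3) 1 + e', ?_, ?_⟩
        · rw [rootedExp, List.mem_append]
          exact Or.inl (List.mem_map.mpr ⟨e', he', rfl⟩)
        · rw [Finsupp.le_def]
          intro j
          simp only [Finsupp.add_apply, Finsupp.single_apply]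
          rcases eq_or_ne (n + 3) j with rfl | hne
          · simp [hs]; exact h
          · simp [hne]; exact hle j
      · have hc2 : 1 ≤ c (n + 2) := by
          rcases hc (n + 2) (by omega) (by omega) with hx | hx
          · exact hx
          · exact absurd hx h
        have hc4 : 1 ≤ c (n + 4) := by
          rcases hc (n + 3) (by omega) (by omega) with hx | hx
          · exact absurd hx h
          · exact hx
        obtain ⟨e', he', hle⟩ := rootedExp_cover (n + 1) c (fun j h1 h2 => hc j h1 (by omega))
        have hsupp := (rootedExp_props (n + 1) e' he').2.1
        have hs2 : e' (n + 2) = 0 := by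
          by_contra hx; exact absurd (hsupp _ hx).2 (by omega)
        have hs4 : e' (n + 4) = 0 := by
          by_contra hx; exact absurd (hsupp _ hx).2 (by omega)
        refine ⟨Finsupp.single (n + 4) 1 + Finsupp.single (n + 2) 1 + e', ?_, ?_⟩
        · rw [rootedExp, List.mem_append]
          exact Or.inr (List.mem_map.mpr ⟨e', he', rfl⟩)
        · rw [Finsupp.le_def]
          intro j
          simp only [Finsupp.add_apply, Finsupp.single_apply]
          rcases eq_or_ne (n + 4) j with rfl | hne4
          · have hne2 : n + 2 ≠ n + 4 := by omega
            simp [hne2, hs4]; exact hc4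
          · rcases eq_or_ne (n + 2) j with rfl | hne2
            · simp [hne4, hs2]; exact hc2
            · simp [hne4, hne2]; exact hle j

lemma monomial_mem_pathCoverIdeal {k : Type*} [Field k] {n : ℕ} {e : ℕ →₀ ℕ}
    (h : ∀ j, 1 ≤ j → j + 1 ≤ n → 1 ≤ e j ∨ 1 ≤ e (j + 1)) :
    monomial e (1 : k) ∈ pathCoverIdeal k n := by
  rw [pathCoverIdeal]
  refine (Submodule.mem_iInf _).mpr fun j => (Submodule.mem_iInf _).mpr fun hj => ?_
  rw [Finset.mem_Icc] at hj
  have hj2 : j + 1 ≤ n := by omega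
  rcases h j hj.1 hj2 with hx | hx
  · have heq : (monomial e (1:k)) = monomial (e - Finsupp.single j 1) 1 * X j := by
      show _ = _ * monomial (Finsupp.single j 1) 1
      rw [monomial_mul, mul_one, tsub_add_cancel_of_le (Finsupp.single_le_iff.mpr hx)]
    rw [heq]
    exact Ideal.mul_mem_left _ _ (Ideal.subset_span (by simp))
  · have heq : (monomial e (1:k)) = monomial (e - Finsupp.single (j+1) 1) 1 * X (j+1) := by
      show _ = _ * monomial (Finsupp.single (j+1) 1) 1
      rw [monomial_mul, mul_one, tsub_add_cancel_of_le (Finsupp.single_le_iff.mpr hx)]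
    rw [heq]
    exact Ideal.mul_mem_left _ _ (Ideal.subset_span (by simp))

lemma pathCoverIdeal_le_span (k : Type*) [Field k] (n : ℕ) :
    pathCoverIdeal k n ≤
      Ideal.span ((fun e => monomial e (1 : k)) '' {e | e ∈ rootedExp n}) := by
  intro p hp
  rw [mem_ideal_span_monomial_image]
  intro c hc
  have hcov : ∀ j, 1 ≤ j → j + 1 ≤ n → 1 ≤ c j ∨ 1 ≤ c (j + 1) := by
    intro j h1 h2
    have hpj : p ∈ Ideal.span {(X j : MvPolynomial ℕ k), X (j + 1)} := by
      rw [pathCoverIdeal] at hp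
      exact (Submodule.mem_iInf _).mp ((Submodule.mem_iInf _).mp hp j) (by
        rw [Finset.mem_Icc]; omega)
    have hrw : ({(X j : MvPolynomial ℕ k), X (j + 1)} : Set (MvPolynomial ℕ k)) =
        (fun e => monomial e (1 : k)) '' {Finsupp.single j 1, Finsupp.single (j + 1) 1} := by
      rw [Set.image_pair]
      rfl
    rw [hrw, mem_ideal_span_monomial_image] at hpj
    obtain ⟨si, hsi, hle⟩ := hpj c hc
    rcases hsi with rfl | rfl
    · exact Or.inl (Finsupp.single_le_iff.mp hle)
    · exact Or.inr (Finsupp.single_le_iff.mp hle)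
  obtain ⟨e, he, hle⟩ := rootedExp_cover n c hcov
  exact ⟨e, he, hle⟩

open Pointwise

/-- Sums of `s`-element lists from `V`. -/
def sumListSet (V : Set (ℕ →₀ ℕ)) (s : ℕ) : Set (ℕ →₀ ℕ) :=
  {d | ∃ l : List (ℕ →₀ ℕ), l.length = s ∧ (∀ x ∈ l, x ∈ V) ∧ d = l.sum}

lemma span_img_pow_le (k : Type*) [Field k] (V : Set (ℕ →₀ ℕ)) :
    ∀ s : ℕ, 1 ≤ s →
    (Ideal.span ((fun e => monomial e (1 : k)) '' V)) ^ s ≤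
      Ideal.span ((fun e => monomial e (1 : k)) '' sumListSet V s) := by
  intro s
  induction s with
  | zero => omega
  | succ m ih =>
    intro _
    rcases Nat.eq_zero_or_pos m with rfl | hm
    · rw [pow_one]
      apply Ideal.span_mono
      apply Set.image_mono
      intro x hx
      exact ⟨[x], rfl, by simpa using hx, by simp⟩
    · rw [pow_succ]
      calc Ideal.span ((fun e => monomial e (1 : k)) '' V) ^ m *
            Ideal.span ((fun e => monomial e (1 : k)) '' V)
          ≤ Ideal.span ((fun e => monomial e (1 : k)) '' sumListSet V m) *
            Ideal.span ((fun e => monomial e (1 : k)) '' V) :=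
            Ideal.mul_mono_left (ih hm)
        _ = Ideal.span (((fun e => monomial e (1 : k)) '' sumListSet V m) *
              ((fun e => monomial e (1 : k)) '' V)) := Ideal.span_mul_span' _ _
        _ ≤ Ideal.span ((fun e => monomial e (1 : k)) '' sumListSet V (m + 1)) := by
            apply Ideal.span_mono
            rintro x hx
            rw [Set.mem_mul] at hx
            obtain ⟨m1, hm1, m2, hm2, rfl⟩ := hx
            obtain ⟨d, hd, rfl⟩ := hm1
            obtain ⟨v, hv, rfl⟩ := hm2
            obtain ⟨l, hlen, hlV, rfl⟩ := hd
            refine ⟨l.sum + v, ⟨l ++ [v], by simp [hlen], ?_, by simp⟩, ?_⟩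
            · intro x hx
              rcases List.mem_append.mp hx with hx | hx
              · exact hlV x hx
              · simp at hx; subst hx; exact hv
            · simp [monomial_mul]

lemma listSum_apply (l : List (ℕ →₀ ℕ)) (j : ℕ) : l.sum j = (l.map fun x => x j).sum := by
  induction l with
  | nil => simp
  | cons x xs ih => simp [Finsupp.add_apply, ih]

lemma sum_pair_eq (l : List (ℕ →₀ ℕ)) (j j' : ℕ) (h : ∀ x ∈ l, x j + x j' = 1) :
    l.sum j + l.sum j' = l.length := by
  induction l with
  | nil => simp
  | cons x xs ih =>
    simp only [List.sum_cons, Finsupp.add_apply, List.length_cons]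
    have h1 := h x (by simp)
    have h2 := ih (fun y hy => h y (by simp [hy]))
    omega

lemma sum_pair_ge (l : List (ℕ →₀ ℕ)) (j j' : ℕ) (h : ∀ x ∈ l, 1 ≤ x j + x j') :
    l.length ≤ l.sum j + l.sum j' := by
  induction l with
  | nil => simp
  | cons x xs ih =>
    simp only [List.sum_cons, Finsupp.add_apply, List.length_cons]
    have h1 := h x (by simp)
    have h2 := ih (fun y hy => h y (by simp [hy]))
    omega

lemma prod_pow_monomial (k : Type*) [Field k] (r : ℕ) (E : ℕ → (ℕ →₀ ℕ)) (a : ℕ → ℕ) :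
    (∏ p ∈ Finset.range r, (monomial (E p) (1:k)) ^ (a p)) =
      monomial (∑ p ∈ Finset.range r, a p • E p) 1 := by
  induction r with
  | zero => simp [monomial_zero']
  | succ m ih =>
    rw [Finset.prod_range_succ, Finset.sum_range_succ, ih, monomial_pow, one_pow,
      monomial_mul, mul_one]

lemma prod_pow_mem_pow {R : Type*} [CommRing R] (I : Ideal R) (r : ℕ) (x : ℕ → R) (a : ℕ → ℕ)
    (hx : ∀ p < r, x p ∈ I) :
    (∏ p ∈ Finset.range r, x p ^ a p) ∈ I ^ (∑ p ∈ Finset.range r, a p) := by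
  induction r with
  | zero => simp [Ideal.one_eq_top]
  | succ m ih =>
    rw [Finset.prod_range_succ, Finset.sum_range_succ, pow_add]
    exact Ideal.mul_mem_mul (ih fun p hp => hx p (by omega)) (Ideal.pow_mem_pow (hx m (by omega)) _)

end AuxFacts

/-- Let `n ≥ 2`, `s ≥ 2`, and let `U` be an `s`-fold product of the
minimal generators `u_1, …, u_r` of `J(P_n)` (enumerated by the rooted list) with
exponent vector `a`.  If `U` is not a minimal generator of `J(P_n)^s`, then there are
indices `p, q` with `a p > 0`, `a q > 0` and `u_p u_q ∉ G(J(P_n)^2)`. -/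
theorem nonminimal_sFold_contains_nonminimal_pair (k : Type*) [Field k]
    (n s : ℕ) (hn : 2 ≤ n) (hs : 2 ≤ s)
    (a : ℕ → ℕ) (U : MvPolynomial ℕ k)
    (hU : IsExprOn (rootedList k n) s a U)
    (hnm : U ∉ minGens ((pathCoverIdeal k n) ^ s)) :
    ∃ p q, 0 < a p ∧ 0 < a q ∧
      (rootedList k n).getD p 1 * (rootedList k n).getD q 1 ∉
        minGens ((pathCoverIdeal k n) ^ 2) := by
  classical
  obtain ⟨ha0, hsum, hUeq⟩ := hU
  set r := (rootedList k n).length with hr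
  have hrlen : (rootedExp n).length = r := by
    rw [hr, rootedList_eq_map k n, List.length_map]
  set E : ℕ → (ℕ →₀ ℕ) := fun p => (rootedExp n).getD p 0 with hE
  have hmemE : ∀ p, p < r → E p ∈ rootedExp n := by
    intro p hp
    rw [hE]
    simp only
    rw [List.getD_eq_getElem _ _ (by omega)]
    exact List.getElem_mem _
  have hprops : ∀ p, p < r → RootedProps n (E p) :=
    fun p hp => rootedExp_props n (E p) (hmemE p hp)
  have hgetD : ∀ p, p < r → (rootedList k n).getD p 1 = monomial (E p) (1:k) := by
    intro p hp
    rw [rootedList_eq_map k n]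
    rw [List.getD_eq_getElem _ _ (by simpa [hrlen] using hp), List.getElem_map]
    rw [hE]
    simp only
    rw [List.getD_eq_getElem _ _ (by omega)]
  set t : ℕ →₀ ℕ := ∑ p ∈ Finset.range r, a p • E p with ht
  have htapp : ∀ j, t j = ∑ p ∈ Finset.range r, a p * E p j := by
    intro j
    rw [ht, Finsupp.finset_sum_apply]
    apply Finset.sum_congr rfl
    intro p _
    rw [Finsupp.smul_apply, smul_eq_mul]
  have hUmono : U = monomial t (1:k) := by
    rw [hUeq, ht, ← prod_pow_monomial k r E a]
    apply Finset.prod_congr rfl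
    intro p hp
    rw [hgetD p (Finset.mem_range.mp hp)]
  have hedge : ∀ p, p < r → ∀ j, 1 ≤ j → j + 1 ≤ n → 1 ≤ E p j ∨ 1 ≤ E p (j+1) := by
    intro p hp j h1 h2
    have := (hprops p hp).2.2.1 j h1 h2
    omega
  have hUJ : U ∈ pathCoverIdeal k n ^ s := by
    rw [hUeq, ← hsum]
    apply prod_pow_mem_pow
    intro p hp
    rw [hgetD p hp]
    exact monomial_mem_pathCoverIdeal (hedge p hp)
  have hUisMono : IsMonomial U := ⟨t, hUmono⟩
  simp only [minGens, Set.mem_setOf_eq] at hnm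
  push_neg at hnm
  obtain ⟨m', hm'mono, hm'J, hm'dvd, hm'ne⟩ := hnm hUisMono hUJ
  obtain ⟨c', rfl⟩ := hm'mono
  have hone : (1:k) ≠ 0 := one_ne_zero
  have hc't : c' ≤ t := by
    rw [hUmono, monomial_dvd_monomial] at hm'dvd
    rcases hm'dvd.1 with h | h
    · exact absurd h hone
    · exact h
  have hJle : pathCoverIdeal k n ^ s ≤
      Ideal.span ((fun e => monomial e (1:k)) '' sumListSet {e | e ∈ rootedExp n} s) := by
    refine le_trans ?_ (span_img_pow_le k _ s (by omega))
    exact Ideal.pow_right_mono (pathCoverIdeal_le_span k n) s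
  have hm'' := hJle hm'J
  rw [mem_ideal_span_monomial_image] at hm''
  have hsupp : c' ∈ (monomial c' (1:k)).support := by
    rw [support_monomial, if_neg hone]
    simp
  obtain ⟨d, hd, hdle⟩ := hm'' c' hsupp
  obtain ⟨l, hlen, hlV, rfl⟩ := hd
  have hwt : l.sum ≤ t := le_trans hdle hc't
  have hwne : l.sum ≠ t := by
    intro h
    apply hm'ne
    have hceq : c' = t := le_antisymm hc't (h ▸ hdle)
    rw [hceq, hUmono]
  obtain ⟨i, hi⟩ : ∃ i, l.sum i < t i := by
    by_contra h
    push_neg at h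
    exact hwne (le_antisymm hwt (Finsupp.le_def.mpr h))
  have hlprops : ∀ x ∈ l, RootedProps n x := fun x hx => rootedExp_props n x (hlV x hx)
  have hts : ∑ p ∈ Finset.range r, a p = s := hsum
  have ht12 : t 1 + t 2 = s := by
    rw [htapp 1, htapp 2, ← Finset.sum_add_distrib, ← hts]
    apply Finset.sum_congr rfl
    intro p hp
    have hx := ((hprops p (Finset.mem_range.mp hp)).2.2.2.1 hn).1
    rw [← mul_add, hx, mul_one]
  have htn2 : t (n-1) + t n = s := by
    rw [htapp (n-1), htapp n, ← Finset.sum_add_distrib, ← hts]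
    apply Finset.sum_congr rfl
    intro p hp
    have hx := ((hprops p (Finset.mem_range.mp hp)).2.2.2.1 hn).2
    rw [← mul_add, hx, mul_one]
  have hw12 : l.sum 1 + l.sum 2 = s := by
    rw [← hlen]
    exact sum_pair_eq l 1 2 (fun x hx => ((hlprops x hx).2.2.2.1 hn).1)
  have hwn2 : l.sum (n-1) + l.sum n = s := by
    rw [← hlen]
    exact sum_pair_eq l (n-1) n (fun x hx => ((hlprops x hx).2.2.2.1 hn).2)
  have hwle : ∀ j, l.sum j ≤ t j := Finsupp.le_def.mp hwt
  have hi1 : i ≠ 1 := by rintro rfl; have := hwle 2; omega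
  have hi2 : i ≠ 2 := by rintro rfl; have := hwle 1; omega
  have hin1 : i ≠ n - 1 := by rintro rfl; have := hwle n; omega
  have hinn : i ≠ n := by intro hx; subst hx; have := hwle (i-1); omega
  have hil : 1 ≤ i ∧ i ≤ n := by
    by_contra h
    have hti : t i = 0 := by
      rw [htapp]
      apply Finset.sum_eq_zero
      intro p hp
      rcases Nat.eq_zero_or_pos (E p i) with h0 | h0
      · rw [h0, Nat.mul_zero]
      · exact absurd ((hprops p (Finset.mem_range.mp hp)).2.1 i (by omega)) h
    omega
  have hi3 : 3 ≤ i := by omega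
  have hin2 : i + 2 ≤ n := by omega
  have hwedge1 : s ≤ l.sum (i-1) + l.sum i := by
    rw [← hlen]
    apply sum_pair_ge
    intro x hx
    have h3 := (hlprops x hx).2.2.1 (i-1) (by omega) (by omega)
    have hrw : i - 1 + 1 = i := by omega
    rw [hrw] at h3
    exact h3
  have hwedge2 : s ≤ l.sum i + l.sum (i+1) := by
    rw [← hlen]
    exact sum_pair_ge l i (i+1) (fun x hx => (hlprops x hx).2.2.1 i (by omega) (by omega))
  have htl : s + 1 ≤ t (i-1) + t i := by have := hwle (i-1); omega
  have htr : s + 1 ≤ t i + t (i+1) := by have := hwle (i+1); omega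
  have hfind : ∀ j j', (s + 1 ≤ t j + t j') →
      ∃ p, p < r ∧ 0 < a p ∧ 1 ≤ E p j ∧ 1 ≤ E p j' := by
    intro j j' hsj
    by_contra h
    push_neg at h
    have hb : t j + t j' ≤ s := by
      rw [htapp, htapp, ← Finset.sum_add_distrib, ← hts]
      apply Finset.sum_le_sum
      intro p hp
      have hp' := Finset.mem_range.mp hp
      rcases Nat.eq_zero_or_pos (a p) with h0 | h0
      · simp [h0]
      · have hne := h p hp' h0
        have e1 := (hprops p hp').1 j
        have e2 := (hprops p hp').1 j'
        have hle1 : E p j + E p j' ≤ 1 := by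
          by_cases hj : 1 ≤ E p j
          · have := hne hj; omega
          · omega
        calc a p * E p j + a p * E p j' = a p * (E p j + E p j') := (mul_add _ _ _).symm
          _ ≤ a p * 1 := Nat.mul_le_mul_left _ hle1
          _ = a p := mul_one _
    omega
  obtain ⟨p, hpr, hap, hep1, hep2⟩ := hfind (i-1) i htl
  obtain ⟨q, hqr, haq, heq1, heq2⟩ := hfind i (i+1) htr
  have hep1' : (E p) (i-1) = 1 := le_antisymm ((hprops p hpr).1 _) hep1
  have hepi : (E p) i = 1 := le_antisymm ((hprops p hpr).1 _) hep2
  have heqi : (E q) i = 1 := le_antisymm ((hprops q hqr).1 _) heq1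
  have heq2' : (E q) (i+1) = 1 := le_antisymm ((hprops q hqr).1 _) heq2
  set A : ℕ →₀ ℕ := (E p).filter (fun j => j < i) + (E q).filter (fun j => i < j) with hA
  set B : ℕ →₀ ℕ := (E q).filter (fun j => j < i) + Finsupp.single i 1 +
      (E p).filter (fun j => i < j) with hB
  have hAapp : ∀ j, A j = if j < i then (E p) j else if i < j then (E q) j else 0 := by
    intro j
    rw [hA, Finsupp.add_apply, Finsupp.filter_apply, Finsupp.filter_apply]
    split_ifs <;> omega
  have hBapp : ∀ j, B j = if j < i then (E q) j else if j = i then 1 else (E p) j := by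
    intro j
    rw [hB, Finsupp.add_apply, Finsupp.add_apply, Finsupp.filter_apply, Finsupp.filter_apply,
      Finsupp.single_apply]
    split_ifs <;> omega
  have hAcov : ∀ j, 1 ≤ j → j + 1 ≤ n → 1 ≤ A j ∨ 1 ≤ A (j+1) := by
    intro j h1 h2
    rcases lt_trichotomy (j+1) i with h | h | h
    · have he := (hprops p hpr).2.2.1 j h1 h2
      have a1 : A j = (E p) j := by rw [hAapp, if_pos (by omega)]
      have a2 : A (j+1) = (E p) (j+1) := by rw [hAapp, if_pos (by omega)]
      omega
    · left
      have a1 : A j = (E p) (i-1) := by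
        rw [hAapp, if_pos (by omega)]
        congr 1
        omega
      omega
    · rcases eq_or_ne j i with rfl | hne
      · right
        have a2 : A (j+1) = (E q) (j+1) := by
          rw [hAapp, if_neg (by omega), if_pos (by omega)]
        omega
      · have he := (hprops q hqr).2.2.1 j h1 h2
        have a1 : A j = (E q) j := by rw [hAapp, if_neg (by omega), if_pos (by omega)]
        have a2 : A (j+1) = (E q) (j+1) := by rw [hAapp, if_neg (by omega), if_pos (by omega)]
        omega
  have hBcov : ∀ j, 1 ≤ j → j + 1 ≤ n → 1 ≤ B j ∨ 1 ≤ B (j+1) := by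
    intro j h1 h2
    rcases lt_trichotomy (j+1) i with h | h | h
    · have he := (hprops q hqr).2.2.1 j h1 h2
      have a1 : B j = (E q) j := by rw [hBapp, if_pos (by omega)]
      have a2 : B (j+1) = (E q) (j+1) := by rw [hBapp, if_pos (by omega)]
      omega
    · right
      have a2 : B (j+1) = 1 := by rw [hBapp, if_neg (by omega), if_pos (by omega)]
      omega
    · rcases eq_or_ne j i with rfl | hne
      · left
        have a1 : B j = 1 := by rw [hBapp, if_neg (by omega), if_pos rfl]
        omega
      · have he := (hprops p hpr).2.2.1 j h1 h2
        have a1 : B j = (E p) j := by rw [hBapp, if_neg (by omega), if_neg (by omega)]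
        have a2 : B (j+1) = (E p) (j+1) := by rw [hBapp, if_neg (by omega), if_neg (by omega)]
        omega
  have hABle : ∀ j, A j + B j ≤ (E p) j + (E q) j := by
    intro j
    rcases lt_trichotomy j i with h | h | h
    · have a1 : A j = (E p) j := by rw [hAapp, if_pos h]
      have b1 : B j = (E q) j := by rw [hBapp, if_pos h]
      omega
    · subst h
      have a1 : A j = 0 := by rw [hAapp, if_neg (lt_irrefl _), if_neg (lt_irrefl _)]
      have b1 : B j = 1 := by rw [hBapp, if_neg (lt_irrefl _), if_pos rfl]
      omega
    · have a1 : A j = (E q) j := by rw [hAapp, if_neg (by omega), if_pos h]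
      have b1 : B j = (E p) j := by rw [hBapp, if_neg (by omega), if_neg (by omega)]
      omega
  have hABi : A i + B i = 1 := by
    have a1 : A i = 0 := by rw [hAapp, if_neg (lt_irrefl _), if_neg (lt_irrefl _)]
    have b1 : B i = 1 := by rw [hBapp, if_neg (lt_irrefl _), if_pos rfl]
    omega
  refine ⟨p, q, hap, haq, ?_⟩
  intro hmem
  obtain ⟨_, _, h3⟩ := hmem
  have hupq : (rootedList k n).getD p 1 * (rootedList k n).getD q 1
      = monomial ((E p) + (E q)) (1:k) := by
    rw [hgetD p hpr, hgetD q hqr, monomial_mul, one_mul]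
  have hABmem : monomial (A + B) (1:k) ∈ pathCoverIdeal k n ^ 2 := by
    have hx : monomial (A + B) (1:k) = monomial A 1 * monomial B 1 := by
      rw [monomial_mul, one_mul]
    rw [hx, pow_two]
    exact Ideal.mul_mem_mul (monomial_mem_pathCoverIdeal hAcov)
      (monomial_mem_pathCoverIdeal hBcov)
  have hdvd : monomial (A + B) (1:k) ∣ (rootedList k n).getD p 1 * (rootedList k n).getD q 1 := by
    rw [hupq, monomial_dvd_monomial]
    refine ⟨Or.inr (Finsupp.le_def.mpr fun j => ?_), one_dvd _⟩
    have := hABle j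
    simp only [Finsupp.add_apply]
    omega
  have heqfinal := h3 _ ⟨A + B, rfl⟩ hABmem hdvd
  rw [hupq] at heqfinal
  have hexp : A + B = (E p) + (E q) := monomial_left_injective hone heqfinal
  have h1 : (A + B) i = ((E p) + (E q)) i := by rw [hexp]
  simp only [Finsupp.add_apply] at h1
  omega
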